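/- Let A > 0 and κ > 0. For every ξ ∈ ℝ∖{0}: lim_{ε→0⁺} ∫_ℝ e^{−ixξ}·(ε·cosh(κx/2) − iA·sinh(κx/2))^{−1} dx = (4π/(Aκ))·(1 + e^{−2πξ/κ})^{−1}. -/

import Mathlib

set_option maxHeartbeats 1000000


/-!
STATEMENT 16.

Let `A > 0` and `κ > 0`.  For every `ξ ∈ ℝ∖{0}` :
`lim_{ε→0⁺} ∫_ℝ e^{−ixξ}(ε·cosh(κx/2) − iA·sinh(κx/2))^{−1} dx
  = (4π/(Aκ))(1 + e^{−2πξ/κ})^{−1}`.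
-/

noncomputable section
open Real MeasureTheory Filter Complex Set Metric Topology

namespace Stmt16


lemma cpow_pos_real' {r : ℝ} (hr : 0 < r) (s : ℂ) :
    (r : ℂ) ^ s = Complex.exp (s * Real.log r) := by
  rw [Complex.cpow_def_of_ne_zero (by exact_mod_cast hr.ne'), ← Complex.ofReal_log hr.le,
    mul_comm]

lemma norm_cpow_I {u : ℝ} (hu : 0 < u) (ω : ℝ) : ‖(u : ℂ) ^ (-(ω:ℂ) * I)‖ = 1 := by
  rw [Complex.norm_cpow_eq_rpow_re_of_pos hu]
  simp

lemma normSq_denom_ge {w : ℂ} (hw : 0 < w.re) (u : ℝ) :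
    w.re ^ 2 * (w.re ^ 2 + u ^ 2) ≤ Complex.normSq ((u:ℂ) ^ 2 + w ^ 2) := by
  rw [show ((u:ℂ)^2 + w^2) = (u*u : ℂ) + w*w by ring]
  simp only [Complex.normSq_apply, Complex.add_re, Complex.add_im, Complex.mul_re,
    Complex.mul_im, Complex.ofReal_re, Complex.ofReal_im]
  nlinarith [sq_nonneg (u * u - w.im * w.im), sq_nonneg u, sq_nonneg w.im,
    sq_nonneg (w.re * u), sq_nonneg (w.re * w.im)]

lemma denom_ne_zero {w : ℂ} (hw : 0 < w.re) (u : ℝ) : (u:ℂ) ^ 2 + w ^ 2 ≠ 0 := by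
  intro h
  have h2 := normSq_denom_ge hw u
  rw [h, Complex.normSq_zero] at h2
  nlinarith [pow_pos hw 2, sq_nonneg u]

lemma norm_denom_ge {w : ℂ} (hw : 0 < w.re) (u : ℝ) :
    w.re * Real.sqrt (w.re ^ 2 + u ^ 2) ≤ ‖(u:ℂ) ^ 2 + w ^ 2‖ := by
  have h := normSq_denom_ge hw u
  have h1 : ‖(u:ℂ) ^ 2 + w ^ 2‖ ^ 2 = Complex.normSq ((u:ℂ)^2 + w^2) := by
    rw [Complex.sq_norm]
  have h2 : (0:ℝ) ≤ ‖(u:ℂ) ^ 2 + w ^ 2‖ := norm_nonneg _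
  have h3 : Real.sqrt (w.re ^ 2 + u ^ 2) ^ 2 = w.re ^ 2 + u ^ 2 :=
    Real.sq_sqrt (by positivity)
  nlinarith [Real.sqrt_nonneg (w.re ^ 2 + u ^ 2),
    sq_nonneg (‖(u:ℂ)^2+w^2‖ - w.re * Real.sqrt (w.re^2+u^2)),
    mul_pos hw (Real.sqrt_pos.mpr (by positivity : (0:ℝ) < w.re^2+u^2))]



lemma contOn {c w : ℂ} (hw : 0 < w.re) :
    ContinuousOn (fun u : ℝ => (u:ℂ) ^ c / ((u:ℂ) ^ 2 + w ^ 2)) (Ioi 0) := by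
  intro u hu
  exact (ContinuousAt.continuousWithinAt
    (((continuousAt_ofReal_cpow_const u c (Or.inr (ne_of_gt hu))).div
      (by fun_prop) (denom_ne_zero hw u))))

lemma integrable_bound (C₁ C₂ : ℝ) {R : ℝ} (hR : 0 < R) :
    IntegrableOn (fun u : ℝ => if u ≤ R then C₁ else C₂ * u ^ (-2:ℝ)) (Ioi 0) := by
  rw [← Ioc_union_Ioi_eq_Ioi hR.le]
  apply IntegrableOn.union
  · exact IntegrableOn.congr_fun (integrableOn_const measure_Ioc_lt_top.ne)
      (fun x hx => (if_pos hx.2).symm) measurableSet_Ioc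
  · exact IntegrableOn.congr_fun
      ((integrableOn_Ioi_rpow_of_lt (by norm_num : (-2:ℝ) < -1) hR).const_mul C₂)
      (fun x hx => (if_neg (not_le.mpr hx)).symm) measurableSet_Ioi

lemma sq_le_norm_denom {w : ℂ} (hw : 0 < w.re) (u : ℝ) :
    w.re ^ 2 ≤ ‖(u:ℂ) ^ 2 + w ^ 2‖ := by
  have hn := norm_denom_ge hw u
  have h1 : Real.sqrt (w.re ^ 2) ≤ Real.sqrt (w.re ^ 2 + u ^ 2) :=
    Real.sqrt_le_sqrt (by nlinarith [sq_nonneg u])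
  rw [Real.sqrt_sq hw.le] at h1
  nlinarith

lemma aux_real {N W u : ℝ} (hu : 0 < u) (hWn : 0 ≤ W) (h2 : 2 * W + 1 < u)
    (h3 : u ^ 2 - W ^ 2 ≤ N) : N⁻¹ ≤ 2 * u ^ (-2:ℝ) := by
  have h4 : u ^ 2 / 2 ≤ N := by nlinarith
  have h5 : u ^ (-2:ℝ) = (u ^ 2)⁻¹ := by
    rw [show (-2:ℝ) = ((-2:ℤ):ℝ) by norm_num, Real.rpow_intCast, zpow_neg, zpow_two,
      ← pow_two]
  rw [h5]
  have h6 := inv_anti₀ (by positivity : (0:ℝ) < u^2/2) h4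
  calc N⁻¹ ≤ (u^2/2)⁻¹ := h6
    _ = 2 * (u^2)⁻¹ := by field_simp

lemma norm_le_of_big {w : ℂ} {u : ℝ} (h2 : 2 * ‖w‖ + 1 < u) :
    ‖(u:ℂ) ^ 2 + w ^ 2‖⁻¹ ≤ 2 * u ^ (-2:ℝ) := by
  have hu : 0 < u := lt_of_le_of_lt (by positivity) h2
  refine aux_real hu (norm_nonneg w) h2 ?_
  have h := norm_sub_norm_le ((u:ℂ)^2) (-(w^2))
  rw [sub_neg_eq_add, norm_neg, norm_pow, norm_pow, Complex.norm_real,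
    Real.norm_eq_abs, abs_of_pos hu] at h
  exact h

lemma integrable_main {ω : ℝ} {w : ℂ} (hw : 0 < w.re) :
    IntegrableOn (fun u : ℝ => (u:ℂ) ^ (-(ω:ℂ) * I) / ((u:ℂ) ^ 2 + w ^ 2)) (Ioi 0) := by
  apply Integrable.mono' (integrable_bound ((w.re ^ 2)⁻¹) 2 (R := 2 * ‖w‖ + 1) (by positivity))
    ((contOn hw).aestronglyMeasurable measurableSet_Ioi)
  rw [ae_restrict_iff' measurableSet_Ioi]
  filter_upwards with u hu
  rw [norm_div, norm_cpow_I hu, one_div]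
  split_ifs with h
  · exact inv_anti₀ (by positivity) (sq_le_norm_denom hw u)
  · exact norm_le_of_big (not_le.1 h)

lemma integrable_inv_sq_add {a : ℝ} (ha : 0 < a) :
    Integrable (fun u : ℝ => (a ^ 2 + u ^ 2)⁻¹) := by
  have h := (integrable_inv_one_add_sq.comp_div (ha.ne')).const_mul ((a ^ 2)⁻¹)
  apply h.congr
  filter_upwards with u
  rw [div_pow]
  field_simp




lemma re_p (ω : ℝ) : ((1 - (ω:ℂ) * I) / 2).re = 1/2 := by
  simp [Complex.div_re, Complex.normSq_apply]

lemma re_q (ω : ℝ) : ((1 + (ω:ℂ) * I) / 2).re = 1/2 := by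
  simp [Complex.div_re, Complex.normSq_apply]

/-- Value of the relevant Beta integral. -/
lemma beta_value (ω : ℝ) :
    Complex.betaIntegral ((1 - (ω:ℂ) * I) / 2) ((1 + (ω:ℂ) * I) / 2)
      = (π : ℂ) / Real.cosh (π * ω / 2) := by
  have hp : 0 < ((1 - (ω:ℂ) * I) / 2).re := by rw [re_p]; norm_num
  have hq : 0 < ((1 + (ω:ℂ) * I) / 2).re := by rw [re_q]; norm_num
  have h := Complex.Gamma_mul_Gamma_eq_betaIntegral hp hq
  rw [show (1 - (ω:ℂ) * I) / 2 + (1 + (ω:ℂ) * I) / 2 = 1 by ring,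
    Complex.Gamma_one, one_mul] at h
  rw [← h, show (1 + (ω:ℂ) * I) / 2 = 1 - (1 - (ω:ℂ) * I) / 2 by ring,
    Complex.Gamma_mul_Gamma_one_sub]
  congr 1
  rw [show (π : ℂ) * ((1 - (ω:ℂ) * I) / 2) = (π:ℂ)/2 - ((π * ω / 2 : ℝ) : ℂ) * I by
    push_cast; ring]
  rw [Complex.sin_pi_div_two_sub, Complex.cos_mul_I, Complex.ofReal_cosh]

lemma exp3 (x y z : ℂ) :
    2 * Complex.exp x * (Complex.exp y * Complex.exp z)
      = 2 * Complex.exp (x + (y + z)) := by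
  rw [← Complex.exp_add y z, mul_assoc, ← Complex.exp_add x (y + z)]

/-- The pointwise substitution identity. -/
lemma subst_pointwise (ω : ℝ) {u : ℝ} (hu : 0 < u) :
    |2 * u / (1 + u ^ 2) ^ 2| •
      ((((u ^ 2 / (1 + u ^ 2) : ℝ)) : ℂ) ^ ((1 - (ω:ℂ) * I) / 2 - 1) *
        (1 - (((u ^ 2 / (1 + u ^ 2) : ℝ)) : ℂ)) ^ ((1 + (ω:ℂ) * I) / 2 - 1))
      = 2 * (u : ℂ) ^ (-(ω:ℂ) * I) / ((u:ℂ) ^ 2 + 1) := by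
  have hden : (0:ℝ) < 1 + u ^ 2 := by positivity
  have hx : (0:ℝ) < u ^ 2 / (1 + u ^ 2) := by positivity
  have h1x : (1 : ℝ) - u ^ 2 / (1 + u ^ 2) = (1 + u ^ 2)⁻¹ := by field_simp; ring
  have hlog : Real.log (u ^ 2 / (1 + u ^ 2))
      = 2 * Real.log u - Real.log (1 + u ^ 2) := by
    rw [Real.log_div (by positivity) hden.ne', Real.log_pow]
    push_cast; ring
  have h1xC : (1 : ℂ) - (((u ^ 2 / (1 + u ^ 2) : ℝ)) : ℂ) = (((1 + u ^ 2)⁻¹ : ℝ) : ℂ) := by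
    rw [← Complex.ofReal_one, ← Complex.ofReal_sub, h1x]
  rw [h1xC, cpow_pos_real' hx, cpow_pos_real' (by positivity), cpow_pos_real' hu,
    Real.log_inv, hlog, abs_of_pos (by positivity), Complex.real_smul]
  have hcu : (u : ℂ) = Complex.exp ((Real.log u : ℝ) : ℂ) := by
    rw [← Complex.ofReal_exp, Real.exp_log hu]
  have hc1 : ((1 + u ^ 2 : ℝ) : ℂ) = Complex.exp ((Real.log (1 + u ^ 2) : ℝ) : ℂ) := by
    rw [← Complex.ofReal_exp, Real.exp_log hden]
  have hcast : ((2 * u / (1 + u ^ 2) ^ 2 : ℝ) : ℂ)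
      = 2 * (u:ℂ) / (((1 + u ^ 2 : ℝ) : ℂ)) ^ 2 := by push_cast; ring
  have hden2 : ((u:ℂ) ^ 2 + 1) = ((1 + u ^ 2 : ℝ) : ℂ) := by push_cast; ring
  rw [hcast, hden2, hcu, hc1, div_mul_eq_mul_div, exp3,
    div_eq_div_iff (pow_ne_zero 2 (Complex.exp_ne_zero _)) (Complex.exp_ne_zero _),
    mul_assoc, ← Complex.exp_add, ← Complex.exp_nat_mul, mul_assoc, ← Complex.exp_add]
  congr 1
  push_cast
  ring



lemma sq_div_hasDeriv (u : ℝ) :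
    HasDerivAt (fun u : ℝ => u ^ 2 / (1 + u ^ 2)) (2 * u / (1 + u ^ 2) ^ 2) u := by
  have hden : (0:ℝ) < 1 + u ^ 2 := by positivity
  have h1 : HasDerivAt (fun u : ℝ => 1 + u ^ 2) (2 * u) u := by
    simpa using (hasDerivAt_pow 2 u).const_add 1
  have h2 := (hasDerivAt_pow 2 u).div h1 hden.ne'
  refine h2.congr_deriv ?_
  norm_num
  ring

lemma sq_div_inj : InjOn (fun u : ℝ => u ^ 2 / (1 + u ^ 2)) (Ioi 0) := by
  intro a ha b hb h
  simp only [mem_Ioi] at ha hb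
  have hda : (0:ℝ) < 1 + a ^ 2 := by positivity
  have hdb : (0:ℝ) < 1 + b ^ 2 := by positivity
  have h2 : a ^ 2 * (1 + b ^ 2) = b ^ 2 * (1 + a ^ 2) := by
    field_simp at h
    linarith [h]
  have h3 : a ^ 2 = b ^ 2 := by nlinarith
  nlinarith

lemma sq_div_image : (fun u : ℝ => u ^ 2 / (1 + u ^ 2)) '' (Ioi 0) = Ioo 0 1 := by
  ext y
  constructor
  · rintro ⟨u, hu, rfl⟩
    simp only [mem_Ioi] at hu
    constructor
    · positivity
    · rw [div_lt_one (by positivity)]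
      nlinarith
  · rintro ⟨hy0, hy1⟩
    have h1y : (0:ℝ) < 1 - y := by linarith
    refine ⟨Real.sqrt (y / (1 - y)), ?_, ?_⟩
    · exact Real.sqrt_pos.mpr (div_pos hy0 h1y)
    · have hsq : Real.sqrt (y / (1 - y)) ^ 2 = y / (1 - y) :=
        Real.sq_sqrt (le_of_lt (div_pos hy0 h1y))
      simp only [hsq]
      field_simp
      ring

/-- Evaluation of the Mellin-type integral at `w = 1`. -/
lemma G_one (ω : ℝ) :
    ∫ u in Ioi (0:ℝ), (u:ℂ) ^ (-(ω:ℂ) * I) * (((u:ℂ) ^ 2 + 1))⁻¹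
      = (π : ℂ) / (2 * Real.cosh (π * ω / 2)) := by
  have key : (π : ℂ) / Real.cosh (π * ω / 2)
      = 2 * ∫ u in Ioi (0:ℝ), (u:ℂ) ^ (-(ω:ℂ) * I) * (((u:ℂ) ^ 2 + 1))⁻¹ := by
    rw [← beta_value ω, Complex.betaIntegral,
      intervalIntegral.integral_of_le zero_le_one, integral_Ioc_eq_integral_Ioo,
      ← sq_div_image,
      integral_image_eq_integral_abs_deriv_smul measurableSet_Ioi
        (fun u _ => (sq_div_hasDeriv u).hasDerivWithinAt) sq_div_inj,
      ← integral_const_mul]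
    refine setIntegral_congr_fun measurableSet_Ioi (fun u hu => ?_)
    have h := subst_pointwise ω (mem_Ioi.mp hu)
    simpa [div_eq_mul_inv, mul_assoc] using h
  have hc : (Real.cosh (π * ω / 2) : ℂ) ≠ 0 := by
    exact_mod_cast (Real.cosh_pos (x := π * ω / 2)).ne'
  rw [div_eq_iff hc] at key
  rw [eq_div_iff (mul_ne_zero two_ne_zero hc)]
  linear_combination -key



/-- The parameter-dependent integral. -/
def Gfun (ω : ℝ) (z : ℂ) : ℂ :=
  ∫ u in Ioi (0:ℝ), (u:ℂ) ^ (-(ω:ℂ) * I) / ((u:ℂ) ^ 2 + z ^ 2)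

lemma Gfun_one (ω : ℝ) : Gfun ω 1 = (π : ℂ) / (2 * Real.cosh (π * ω / 2)) := by
  rw [Gfun, ← G_one ω]
  refine setIntegral_congr_fun measurableSet_Ioi (fun u hu => ?_)
  simp [div_eq_mul_inv]

lemma Gfun_scale (ω : ℝ) {t : ℝ} (ht : 0 < t) :
    Gfun ω t = ((t:ℝ):ℂ) ^ ((-(ω:ℂ) * I) - 1) * Gfun ω 1 := by
  have htC : ((t:ℝ):ℂ) ≠ 0 := Complex.ofReal_ne_zero.mpr ht.ne'
  set F : ℝ → ℂ := fun u : ℝ => (u:ℂ) ^ (-(ω:ℂ) * I) / ((u:ℂ) ^ 2 + ((t:ℝ):ℂ) ^ 2) with hF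
  have key := integral_comp_mul_left_Ioi F 0 ht
  rw [mul_zero] at key
  have lhs : (∫ x in Ioi (0:ℝ), F (t * x))
      = (((t:ℝ):ℂ) ^ (-(ω:ℂ) * I) / ((t:ℝ):ℂ) ^ 2) * Gfun ω 1 := by
    rw [Gfun, ← integral_const_mul]
    refine setIntegral_congr_fun measurableSet_Ioi (fun x hx => ?_)
    have hx0 : (0:ℝ) < x := hx
    have hxC : ((x:ℝ):ℂ) ≠ 0 := Complex.ofReal_ne_zero.mpr hx0.ne'
    have hden : ((x:ℂ) ^ 2 + 1^2) ≠ 0 := denom_ne_zero (w := 1) (by norm_num) x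
    simp only [hF]
    rw [show ((t * x : ℝ):ℂ) = ((t:ℝ):ℂ) * ((x:ℝ):ℂ) from by push_cast; ring,
      mul_cpow_ofReal_nonneg ht.le hx0.le, one_pow]
    field_simp
  have h4 : (∫ x in Ioi (0:ℝ), F x)
      = (t:ℝ) • ((((t:ℝ):ℂ) ^ (-(ω:ℂ) * I) / ((t:ℝ):ℂ) ^ 2) * Gfun ω 1) := by
    rw [← smul_inv_smul₀ ht.ne' (∫ x in Ioi (0:ℝ), F x), ← key, lhs]
  calc Gfun ω ((t:ℝ):ℂ) = ∫ x in Ioi (0:ℝ), F x := rfl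
    _ = (t:ℝ) • ((((t:ℝ):ℂ) ^ (-(ω:ℂ) * I) / ((t:ℝ):ℂ) ^ 2) * Gfun ω 1) := h4
    _ = ((t:ℝ):ℂ) ^ ((-(ω:ℂ) * I) - 1) * Gfun ω 1 := by
        rw [Complex.real_smul, Complex.cpow_sub _ _ htC, Complex.cpow_one]
        field_simp

lemma eventually_re_pos {w : ℂ} (hw : 0 < w.re) : ∀ᶠ z : ℂ in 𝓝 w, 0 < z.re :=
  (Complex.continuous_re.tendsto w).eventually (eventually_gt_nhds hw)

lemma ball_re {w z : ℂ} (hz : z ∈ ball w (w.re / 2)) : w.re / 2 ≤ z.re := by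
  have h1 : |(z - w).re| ≤ ‖z - w‖ := Complex.abs_re_le_norm _
  have h2 : ‖z - w‖ < w.re / 2 := by
    rw [← Complex.dist_eq]; exact mem_ball.mp hz
  rw [Complex.sub_re] at h1
  have h3 := abs_lt.mp (lt_of_le_of_lt h1 h2)
  linarith [h3.1]

lemma ball_norm {w z : ℂ} (hz : z ∈ ball w (w.re / 2)) : ‖z‖ ≤ ‖w‖ + w.re / 2 := by
  have h : ‖z - w‖ < w.re / 2 := mem_ball_iff_norm.mp hz
  calc ‖z‖ = ‖w + (z - w)‖ := by ring_nf
    _ ≤ ‖w‖ + ‖z - w‖ := norm_add_le _ _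
    _ ≤ ‖w‖ + w.re / 2 := by linarith

lemma G_hasDeriv (ω : ℝ) {w : ℂ} (hw : 0 < w.re) :
    HasDerivAt (Gfun ω)
      (∫ u in Ioi (0:ℝ), (u:ℂ) ^ (-(ω:ℂ) * I) * (-(2 * w) / (((u:ℂ) ^ 2 + w ^ 2) ^ 2))) w := by
  set c : ℂ := -(ω:ℂ) * I with hc
  set a : ℝ := w.re / 2 with ha
  have ha0 : 0 < a := half_pos hw
  set M : ℝ := ‖w‖ + w.re / 2 with hM
  have hM0 : 0 < M := by
    have := norm_nonneg w; positivity
  have main := hasDerivAt_integral_of_dominated_loc_of_deriv_le (μ := volume.restrict (Ioi 0))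
    (F := fun z (u : ℝ) => (u:ℂ) ^ c / ((u:ℂ) ^ 2 + z ^ 2))
    (F' := fun z (u : ℝ) => (u:ℂ) ^ c * (-(2 * z) / (((u:ℂ) ^ 2 + z ^ 2) ^ 2)))
    (x₀ := w) (bound := fun u => 2 * M / (a ^ 2 * (a ^ 2 + u ^ 2)))
    (s := ball w a) (ball_mem_nhds w ha0) ?_ ?_ ?_ ?_ ?_ ?_
  · exact main.2
  · exact (eventually_re_pos hw).mono fun z hz =>
      ((contOn hz).aestronglyMeasurable measurableSet_Ioi)
  · exact integrable_main hw
  · refine ContinuousOn.aestronglyMeasurable ?_ measurableSet_Ioi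
    intro u hu
    exact ((continuousAt_ofReal_cpow_const u c (Or.inr (ne_of_gt hu))).mul
      (continuousAt_const.div (by fun_prop)
        (pow_ne_zero 2 (denom_ne_zero hw u)))).continuousWithinAt
  · rw [ae_restrict_iff' measurableSet_Ioi]
    filter_upwards with u hu
    intro z hz
    have hu0 : (0:ℝ) < u := hu
    have hzre : a ≤ z.re := ball_re hz
    have hzre0 : 0 < z.re := lt_of_lt_of_le ha0 hzre
    have hzn : ‖z‖ ≤ M := ball_norm hz
    have hns := normSq_denom_ge hzre0 u
    have hD : ‖(((u:ℂ) ^ 2 + z ^ 2)) ^ 2‖ = Complex.normSq ((u:ℂ) ^ 2 + z ^ 2) := by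
      rw [norm_pow, Complex.sq_norm]
    rw [norm_mul, norm_cpow_I hu0, one_mul, norm_div, hD, norm_neg, norm_mul]
    have h2 : ‖(2:ℂ)‖ = 2 := by norm_num
    rw [h2]
    have hmono : a ^ 2 * (a ^ 2 + u ^ 2) ≤ Complex.normSq ((u:ℂ) ^ 2 + z ^ 2) := by
      refine le_trans ?_ hns
      have h1 : a ^ 2 ≤ z.re ^ 2 := by nlinarith
      nlinarith [sq_nonneg u]
    have hpos : (0:ℝ) < a ^ 2 * (a ^ 2 + u ^ 2) := by positivity
    exact div_le_div₀ (by positivity) (by nlinarith [norm_nonneg z]) hpos hmono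
  · have hint := ((integrable_inv_sq_add ha0).const_mul (2 * M / a ^ 2)).restrict
      (s := Ioi 0)
    apply hint.congr
    filter_upwards with u
    field_simp
  · rw [ae_restrict_iff' measurableSet_Ioi]
    filter_upwards with u hu
    intro z hz
    have hzre0 : 0 < z.re := lt_of_lt_of_le ha0 (ball_re hz)
    have h1 : HasDerivAt (fun z : ℂ => (u:ℂ) ^ 2 + z ^ 2) (2 * z) z := by
      simpa using (hasDerivAt_pow 2 z).const_add ((u:ℂ) ^ 2)
    have h2 := (h1.inv (denom_ne_zero hzre0 u)).const_mul ((u:ℂ) ^ c)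
    simpa [div_eq_mul_inv] using h2

lemma Gfun_eq (ω : ℝ) {w : ℂ} (hw : 0 < w.re) :
    Gfun ω w = w ^ ((-(ω:ℂ) * I) - 1) * Gfun ω 1 := by
  set c : ℂ := -(ω:ℂ) * I with hc
  set U : Set ℂ := {z | 0 < z.re} with hU
  have hUo : IsOpen U := isOpen_lt continuous_const Complex.continuous_re
  have hUc : Convex ℝ U := convex_halfSpace_re_gt 0
  have hGd : DifferentiableOn ℂ (Gfun ω) U := fun z hz =>
    ((G_hasDeriv ω hz).differentiableAt).differentiableWithinAt
  have hG : AnalyticOnNhd ℂ (Gfun ω) U := hGd.analyticOnNhd hUo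
  have hH : AnalyticOnNhd ℂ (fun z => z ^ (c - 1) * Gfun ω 1) U := by
    refine DifferentiableOn.analyticOnNhd ?_ hUo
    intro z hz
    exact ((differentiableAt_id.cpow (differentiableAt_const _)
      (Or.inl hz)).mul_const _).differentiableWithinAt
  have h1U : (1:ℂ) ∈ U := by simp [hU]
  have hseq : Tendsto (fun n : ℕ => (((1 + ((n:ℝ)+1)⁻¹ : ℝ)) : ℂ)) atTop (𝓝[≠] (1:ℂ)) := by
    apply tendsto_nhdsWithin_of_tendsto_nhds_of_eventually_within
    · have h0 : Tendsto (fun n : ℕ => ((n:ℝ)+1)⁻¹) atTop (𝓝 0) :=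
        tendsto_inv_atTop_zero.comp (tendsto_atTop_add_const_right _ 1
          tendsto_natCast_atTop_atTop)
      have h1 : Tendsto (fun n : ℕ => (1 + ((n:ℝ)+1)⁻¹ : ℝ)) atTop (𝓝 1) := by
        simpa using h0.const_add 1
      have h2 := (Complex.continuous_ofReal.tendsto 1).comp h1
      exact h2
    · filter_upwards with n
      have hne : (1 + ((n:ℝ)+1)⁻¹ : ℝ) ≠ 1 := by
        have : (0:ℝ) < ((n:ℝ)+1)⁻¹ := by positivity
        linarith
      simp only [mem_compl_iff, mem_singleton_iff]
      exact_mod_cast hne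
  have hfreq : ∃ᶠ z in 𝓝[≠] (1:ℂ), Gfun ω z = z ^ (c - 1) * Gfun ω 1 := by
    apply hseq.frequently
    apply Frequently.of_forall
    intro n
    have ht : (0:ℝ) < 1 + ((n:ℝ)+1)⁻¹ := by positivity
    exact Gfun_scale ω ht
  exact hG.eqOn_of_preconnected_of_frequently_eq hH hUc.isPreconnected h1U hfreq hw



lemma exp_hasDeriv {κ : ℝ} (x : ℝ) :
    HasDerivAt (fun x : ℝ => Real.exp (κ * x / 2)) (Real.exp (κ * x / 2) * (κ / 2)) x := by
  have h1 : HasDerivAt (fun x : ℝ => κ * x / 2) (κ / 2) x := by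
    simpa using ((hasDerivAt_id x).const_mul κ).div_const 2
  exact (Real.hasDerivAt_exp _).comp x h1

lemma exp_inj {κ : ℝ} (hκ : 0 < κ) : InjOn (fun x : ℝ => Real.exp (κ * x / 2)) univ := by
  intro a _ b _ h
  have := Real.exp_injective h
  have h2 : κ * a = κ * b := by linarith
  exact mul_left_cancel₀ hκ.ne' h2

lemma exp_image {κ : ℝ} (hκ : 0 < κ) :
    (fun x : ℝ => Real.exp (κ * x / 2)) '' univ = Ioi 0 := by
  ext y
  constructor
  · rintro ⟨x, _, rfl⟩
    exact Real.exp_pos _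
  · intro hy
    refine ⟨2 / κ * Real.log y, mem_univ _, ?_⟩
    show Real.exp (κ * (2 / κ * Real.log y) / 2) = y
    have h5 : κ * (2 / κ * Real.log y) / 2 = Real.log y := by field_simp
    rw [h5, Real.exp_log hy]

/-- Closed form of the integral for `ε > 0`. -/
lemma main_eq (A κ ξ : ℝ) (hA : 0 < A) (hκ : 0 < κ) {ε : ℝ} (hε : 0 < ε) :
    (∫ x : ℝ, Complex.exp (-Complex.I * x * ξ) *
        ((ε : ℂ) * Complex.cosh (κ * x / 2) - Complex.I * A * Complex.sinh (κ * x / 2))⁻¹)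
    = (4 / (κ:ℂ)) * ((ε:ℂ) - Complex.I * A)⁻¹ *
        ((((ε:ℂ) + Complex.I * A) / ((Real.sqrt (ε^2 + A^2) : ℝ) : ℂ))
          ^ ((-(((2*ξ/κ : ℝ)):ℂ) * Complex.I) - 1)) *
        ((π:ℂ) / (2 * Real.cosh (π * (2*ξ/κ) / 2))) := by
  set ω : ℝ := 2*ξ/κ with hω
  set c : ℂ := -((ω : ℝ):ℂ) * I with hc
  set s : ℝ := Real.sqrt (ε^2 + A^2) with hsdef
  have hs0 : 0 < s := Real.sqrt_pos.mpr (by positivity)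
  have hs2 : s^2 = ε^2 + A^2 := Real.sq_sqrt (by positivity)
  set z : ℂ := (ε:ℂ) - Complex.I * A with hz
  set zb : ℂ := (ε:ℂ) + Complex.I * A with hzb
  set w : ℂ := zb / ((s:ℝ):ℂ) with hw
  have hsC : ((s:ℝ):ℂ) ≠ 0 := Complex.ofReal_ne_zero.mpr hs0.ne'
  have hsC2 : ((s:ℝ):ℂ)^2 = (ε:ℂ)^2 + (A:ℂ)^2 := by
    rw [show ((s:ℝ):ℂ)^2 = ((s^2 : ℝ) : ℂ) by push_cast; ring, hs2]; push_cast; ring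
  have hzz : z * zb = ((s:ℝ):ℂ)^2 := by
    rw [hz, hzb, hsC2]
    linear_combination (-((A:ℂ)^2)) * Complex.I_sq
  have hzw : z * w^2 = zb := by
    rw [hw]
    field_simp
    linear_combination zb * hzz
  have hwexp : w = ((ε/s : ℝ):ℂ) + ((A/s : ℝ):ℂ) * I := by
    rw [hw, hzb]
    push_cast
    field_simp
  have hwre : 0 < w.re := by
    rw [hwexp]
    simp only [Complex.add_re, Complex.ofReal_re, Complex.mul_I_re, Complex.ofReal_im, neg_zero,
      add_zero]
    positivity
  have hzne : z ≠ 0 := by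
    intro h
    have him := congrArg Complex.im h
    rw [hz] at him
    simp at him
    exact hA.ne' him
  have hκC : (κ:ℂ) ≠ 0 := Complex.ofReal_ne_zero.mpr hκ.ne'
  -- the u-side integrand
  set g : ℝ → ℂ := fun u => (4 / (κ:ℂ)) * ((u:ℂ) ^ c / (z * ((u:ℂ)^2 + w^2))) with hg
  have pointwise : ∀ x : ℝ,
      |Real.exp (κ * x / 2) * (κ / 2)| • g (Real.exp (κ * x / 2))
        = Complex.exp (-Complex.I * x * ξ) *
            ((ε : ℂ) * Complex.cosh (κ * x / 2) - Complex.I * A * Complex.sinh (κ * x / 2))⁻¹ := by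
    intro x
    set u : ℝ := Real.exp (κ * x / 2) with hu
    have hu0 : 0 < u := Real.exp_pos _
    have huC : ((u:ℝ):ℂ) ≠ 0 := Complex.ofReal_ne_zero.mpr hu0.ne'
    have hdenne : ((u:ℂ)^2 + w^2) ≠ 0 := denom_ne_zero hwre u
    have hzdne : z * ((u:ℂ)^2 + w^2) ≠ 0 := mul_ne_zero hzne hdenne
    have hcoshR : Real.cosh (κ*x/2) = (u + u⁻¹)/2 := by
      rw [Real.cosh_eq, Real.exp_neg]
    have hsinhR : Real.sinh (κ*x/2) = (u - u⁻¹)/2 := by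
      rw [Real.sinh_eq, Real.exp_neg]
    have hcosh : Complex.cosh ((κ:ℂ)*x/2) = (((u + u⁻¹)/2 : ℝ) : ℂ) := by
      rw [show ((κ:ℂ)*(x:ℂ)/2) = ((κ*x/2 : ℝ):ℂ) by push_cast; ring, ← Complex.ofReal_cosh,
        hcoshR]
    have hsinh : Complex.sinh ((κ:ℂ)*x/2) = (((u - u⁻¹)/2 : ℝ) : ℂ) := by
      rw [show ((κ:ℂ)*(x:ℂ)/2) = ((κ*x/2 : ℝ):ℂ) by push_cast; ring, ← Complex.ofReal_sinh,
        hsinhR]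
    have hD : (ε : ℂ) * Complex.cosh ((κ:ℂ)*x/2) - Complex.I * A * Complex.sinh ((κ:ℂ)*x/2)
        = (z * ((u:ℂ)^2 + w^2)) / (2*(u:ℂ)) := by
      rw [hcosh, hsinh, show z * ((u:ℂ)^2+w^2) = z*(u:ℂ)^2 + zb by rw [mul_add, hzw], hz, hzb]
      push_cast
      field_simp
      ring
    have hcexp : ((u:ℝ):ℂ)^c = Complex.exp (-Complex.I * x * ξ) := by
      rw [cpow_pos_real' hu0, hu, Real.log_exp]
      congr 1
      rw [hc, hω]
      push_cast
      field_simp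
    rw [abs_of_pos (by positivity), Complex.real_smul, hg]
    simp only []
    rw [hcexp, hD]
    push_cast
    field_simp
    ring
  have himage := integral_image_eq_integral_abs_deriv_smul (MeasurableSet.univ)
    (fun x _ => (exp_hasDeriv x).hasDerivWithinAt) (exp_inj hκ) g
  rw [exp_image hκ] at himage
  have hlhs : (∫ x : ℝ, Complex.exp (-Complex.I * x * ξ) *
        ((ε : ℂ) * Complex.cosh (κ * x / 2) - Complex.I * A * Complex.sinh (κ * x / 2))⁻¹)
      = ∫ u in Ioi (0:ℝ), g u := by
    rw [himage, MeasureTheory.setIntegral_univ]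
    exact (integral_congr_ae (Eventually.of_forall fun x => (pointwise x))).symm
  rw [hlhs]
  have hsplit : (∫ u in Ioi (0:ℝ), g u)
      = ((4 / (κ:ℂ)) * z⁻¹) * ∫ u in Ioi (0:ℝ), (u:ℂ) ^ c / ((u:ℂ)^2 + w^2) := by
    rw [← integral_const_mul]
    refine setIntegral_congr_fun measurableSet_Ioi (fun u hu => ?_)
    rw [hg]
    simp only []
    rw [mul_comm z ((u:ℂ)^2 + w^2), div_mul_eq_div_div, div_eq_mul_inv]
    ring
  rw [hsplit]
  have : (∫ u in Ioi (0:ℝ), (u:ℂ) ^ c / ((u:ℂ)^2 + w^2)) = Gfun ω w := rfl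
  rw [this, Gfun_eq ω hwre, Gfun_one]
  rw [hw, hzb, hz, hc]
  ring



lemma limit_part (A κ ξ : ℝ) (hA : 0 < A) (hκ : 0 < κ) :
    Tendsto (fun ε : ℝ => (4 / (κ:ℂ)) * ((ε:ℂ) - Complex.I * A)⁻¹ *
        ((((ε:ℂ) + Complex.I * A) / ((Real.sqrt (ε^2 + A^2) : ℝ) : ℂ))
          ^ ((-(((2*ξ/κ : ℝ)):ℂ) * Complex.I) - 1)) *
        ((π:ℂ) / (2 * Real.cosh (π * (2*ξ/κ) / 2))))
      (nhdsWithin 0 (Set.Ioi 0))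
      (nhds (((4 * Real.pi / (A * κ)) * (1 + Real.exp (-2 * Real.pi * ξ / κ))⁻¹ : ℝ) : ℂ)) := by
  set ω : ℝ := 2*ξ/κ with hω
  set c : ℂ := -((ω : ℝ):ℂ) * I with hc
  have hAC : ((A:ℝ):ℂ) ≠ 0 := Complex.ofReal_ne_zero.mpr hA.ne'
  set l := nhdsWithin (0:ℝ) (Set.Ioi 0) with hl
  have h1 : Tendsto (fun ε:ℝ => (ε:ℂ)) l (𝓝 0) := by
    have h0 : Tendsto (fun ε:ℝ => (ε:ℂ)) (𝓝 0) (𝓝 ((0:ℝ):ℂ)) :=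
      Complex.continuous_ofReal.tendsto 0
    rw [Complex.ofReal_zero] at h0
    rw [hl]
    exact h0.mono_left nhdsWithin_le_nhds
  have hz : Tendsto (fun ε:ℝ => (ε:ℂ) - Complex.I * A) l (𝓝 (0 - Complex.I * A)) :=
    h1.sub_const _
  have hzlim_ne : ((0:ℂ) - Complex.I*A) ≠ 0 := by
    intro h
    have h2 := congrArg Complex.im h
    simp at h2
    exact hA.ne' h2
  have hzinv := hz.inv₀ hzlim_ne
  have hsqrt : Tendsto (fun ε:ℝ => Real.sqrt (ε^2+A^2)) l (𝓝 A) := by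
    have hcont : Continuous fun ε:ℝ => Real.sqrt (ε^2+A^2) :=
      Real.continuous_sqrt.comp (by continuity)
    have h0 := hcont.tendsto 0
    rw [show Real.sqrt ((0:ℝ)^2+A^2) = A by
      rw [show (0:ℝ)^2+A^2 = A^2 by ring, Real.sqrt_sq hA.le]] at h0
    rw [hl]
    exact h0.mono_left nhdsWithin_le_nhds
  have hw : Tendsto (fun ε:ℝ => ((ε:ℂ) + Complex.I * A) / ((Real.sqrt (ε^2+A^2) :ℝ):ℂ)) l
      (𝓝 Complex.I) := by
    have hnum : Tendsto (fun ε:ℝ => (ε:ℂ) + Complex.I * A) l (𝓝 (0 + Complex.I * A)) :=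
      h1.add_const _
    have hden : Tendsto (fun ε:ℝ => ((Real.sqrt (ε^2+A^2):ℝ):ℂ)) l (𝓝 ((A:ℝ):ℂ)) :=
      (Complex.continuous_ofReal.tendsto A).comp hsqrt
    have h := hnum.div hden hAC
    rw [show ((0:ℂ) + Complex.I*(A:ℝ))/((A:ℝ):ℂ) = Complex.I from by field_simp; ring] at h
    exact h
  have hI_slit : Complex.I ∈ Complex.slitPlane := Or.inr (by simp)
  have hwc : Tendsto (fun ε:ℝ => (((ε:ℂ) + Complex.I * A) / ((Real.sqrt (ε^2+A^2) :ℝ):ℂ))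
        ^ (c - 1)) l (𝓝 (Complex.I ^ (c-1))) :=
    (continuousAt_cpow_const hI_slit).tendsto.comp hw
  have hmain := ((tendsto_const_nhds (x := (4/(κ:ℂ))) (f := l)).mul hzinv).mul hwc
  have hmain2 := hmain.mul (tendsto_const_nhds (x := ((π:ℂ) / (2 * Real.cosh (π * ω / 2)))))
  have hval : (((4 * Real.pi / (A * κ)) * (1 + Real.exp (-2 * Real.pi * ξ / κ))⁻¹ : ℝ) : ℂ)
      = (4/(κ:ℂ)) * (0 - Complex.I * A)⁻¹ * (Complex.I ^ (c-1))
          * ((π:ℂ) / (2 * Real.cosh (π * ω / 2))) := by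
    have hIc : Complex.I ^ (c-1) = ((Real.exp (π*ω/2) : ℝ):ℂ) * (-Complex.I) := by
      rw [Complex.cpow_def_of_ne_zero Complex.I_ne_zero, Complex.log_I]
      rw [show (↑π/2 * Complex.I) * (c - 1) = ((π*ω/2 : ℝ):ℂ) + ((-(π/2) : ℝ):ℂ) * Complex.I
        from by rw [hc]; push_cast; linear_combination (-(π:ℂ)*ω/2) * Complex.I_sq]
      rw [Complex.exp_add, ← Complex.ofReal_exp, Complex.exp_mul_I,
        ← Complex.ofReal_cos, ← Complex.ofReal_sin]
      simp [Real.cos_pi_div_two, Real.sin_pi_div_two]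
    have hinv : ((0:ℂ) - Complex.I*(A:ℝ))⁻¹ = Complex.I * ((A:ℝ):ℂ)⁻¹ := by
      rw [show ((0:ℂ) - Complex.I*(A:ℝ)) = -(Complex.I*(A:ℝ)) by ring, inv_neg, mul_inv,
        Complex.inv_I]
      ring
    rw [hIc, hinv]
    rw [show (4/(κ:ℂ)) * (Complex.I * ((A:ℝ):ℂ)⁻¹) * (((Real.exp (π*ω/2) : ℝ):ℂ) * -Complex.I)
          * ((π:ℂ)/(2*((Real.cosh (π*ω/2) : ℝ):ℂ)))
        = (-(Complex.I^2)) * ((4/(κ:ℂ)) * ((A:ℝ):ℂ)⁻¹ * ((Real.exp (π*ω/2) : ℝ):ℂ)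
          * ((π:ℂ)/(2*((Real.cosh (π*ω/2) : ℝ):ℂ)))) from by ring, Complex.I_sq]
    rw [show (-(-1:ℂ)) = 1 by norm_num, one_mul]
    have hCne : Real.cosh (π*ω/2) ≠ 0 := (Real.cosh_pos _).ne'
    have hreal : (4*π/(A*κ)) * (1+Real.exp (-2*π*ξ/κ))⁻¹
        = (4/κ) * A⁻¹ * Real.exp (π*ω/2) * (π/(2*Real.cosh (π*ω/2))) := by
      rw [Real.cosh_eq, show (-2*π*ξ/κ) = -(π*ω/2) + -(π*ω/2) from by rw [hω]; field_simp; ring,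
        Real.exp_add, Real.exp_neg]
      have hEpos := Real.exp_pos (π*ω/2)
      field_simp
    rw [hreal]
    push_cast
    ring
  rw [hval]
  exact hmain2


theorem thermal_fourier_limit (A κ : ℝ) (hA : 0 < A) (hκ : 0 < κ) :
    ∀ ξ : ℝ, ξ ≠ 0 →
      Tendsto (fun ε : ℝ =>
          ∫ x : ℝ, Complex.exp (-Complex.I * x * ξ) *
            ((ε : ℂ) * Complex.cosh (κ * x / 2)
              - Complex.I * A * Complex.sinh (κ * x / 2))⁻¹)
        (nhdsWithin 0 (Set.Ioi 0))
        (nhds (((4 * Real.pi / (A * κ)) *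
          (1 + Real.exp (-2 * Real.pi * ξ / κ))⁻¹ : ℝ) : ℂ)) := by
  intro ξ _
  exact Tendsto.congr'
    (by filter_upwards [self_mem_nhdsWithin] with ε hε
        exact (main_eq A κ ξ hA hκ hε).symm)
    (limit_part A κ ξ hA hκ)

end Stmt16
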